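/- Let n, d, d' be positive integers and λ > 0. For each i = 1,…,n let h_i ∈ ℝ^d and let ℓ_i : ℝ^{d'} → ℝ be differentiable. Define L_λ(W) = (1/n)·Σ_{i=1}^n ℓ_i(W h_i) + (λ/2)·‖W‖_F² for W ∈ ℝ^{d'×d}, and define the bFACT matrix B := −(1/(nλ))·Σ_{i=1}^n (W h_i)(∇ℓ_i(W h_i))^⊤ ∈ ℝ^{d'×d'}. If W is a critical point of L_λ, then (W W^⊤)² = B·B^⊤; consequently, W W^⊤ is the unique positive semidefinite square root of B·B^⊤, i.e. W W^⊤ = √(B·B^⊤). -/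

import Mathlib

open Matrix

attribute [local instance] Matrix.frobeniusSeminormedAddCommGroup
  Matrix.frobeniusNormedAddCommGroup Matrix.frobeniusNormedSpace

/-- The gradient of a function `f : ℝ^k → ℝ`, as a plain vector `Fin k → ℝ`. -/
noncomputable def grad {k : ℕ} (f : EuclideanSpace ℝ (Fin k) → ℝ) (x : Fin k → ℝ) :
    Fin k → ℝ :=
  WithLp.equiv 2 (Fin k → ℝ) <| gradient f ((WithLp.equiv 2 (Fin k → ℝ)).symm x)

section

open scoped ComplexOrder

/-- The positive semidefinite square root of a positive semidefinite matrix (the definition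
`Matrix.PosSemidef.sqrt` of the older Mathlib, removed since). -/
noncomputable def Matrix.PosSemidef.sqrt {n : Type*} [Fintype n] [DecidableEq n] {𝕜 : Type*}
    [RCLike 𝕜] {A : Matrix n n 𝕜} (hA : A.PosSemidef) : Matrix n n 𝕜 :=
  hA.1.eigenvectorUnitary.1 * diagonal ((↑) ∘ (√·) ∘ hA.1.eigenvalues) *
  (star hA.1.eigenvectorUnitary : Matrix n n 𝕜)

end

open scoped MatrixOrder in
lemma psd_eq_sqrt_of_sq_eq {m : ℕ} {A C : Matrix (Fin m) (Fin m) ℝ} (hA : A.PosSemidef)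
    (hC : C.PosSemidef) (h : A ^ 2 = C) : A = hC.sqrt := by
  have h1 : CFC.sqrt C = A := CFC.sqrt_unique (by rw [← h, pow_two]) hA.nonneg
  rw [← h1, CFC.sqrt_eq_cfc, cfc_nnreal_eq_real _ C, hC.1.cfc_eq]
  simp only [IsHermitian.cfc, Matrix.PosSemidef.sqrt]
  have hmx : ∀ i, max (hC.1.eigenvalues i) 0 = hC.1.eigenvalues i :=
    fun i => max_eq_left (hC.eigenvalues_nonneg i)
  simp [Function.comp_def, Real.coe_toNNReal', hmx]

lemma fderiv_eq_inner_gradient {k : ℕ} (f : EuclideanSpace ℝ (Fin k) → ℝ)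
    (x v : EuclideanSpace ℝ (Fin k)) :
    fderiv ℝ f x v = (inner ℝ (gradient f x) v : ℝ) := by
  rw [← InnerProductSpace.toDual_apply_apply]
  simp only [gradient, LinearIsometryEquiv.apply_symm_apply]

set_option maxHeartbeats 1000000 in
/-- **Square-root symmetrization of the backward FACT.** If `W` is a critical point of the
regularized loss, then `(W Wᵀ)² = B Bᵀ` where `B` is the bFACT matrix; consequently `W Wᵀ` is
the unique positive semidefinite square root of `B Bᵀ`, i.e. `W Wᵀ = √(B Bᵀ)`. -/
theorem bfact_sqrt_symmetrization
    (n d d' : ℕ) (hn : 0 < n) (hd : 0 < d) (hd' : 0 < d')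
    (lam : ℝ) (hlam : 0 < lam)
    (h : Fin n → Fin d → ℝ)
    (ℓ : Fin n → EuclideanSpace ℝ (Fin d') → ℝ)
    (hdiff : ∀ i, Differentiable ℝ (ℓ i))
    (W : Matrix (Fin d') (Fin d) ℝ)
    (B : Matrix (Fin d') (Fin d') ℝ)
    (hB : B = (-(1 / (n * lam))) •
      ∑ i, Matrix.vecMulVec (W.mulVec (h i)) (grad (ℓ i) (W.mulVec (h i))))
    (hcrit : fderiv ℝ
      (fun V : Matrix (Fin d') (Fin d) ℝ =>
        (1 / n : ℝ) * ∑ i, ℓ i ((WithLp.equiv 2 (Fin d' → ℝ)).symm (V.mulVec (h i)))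
          + (lam / 2) * ∑ a : Fin d', ∑ b : Fin d, V a b ^ 2) W = 0) :
    (W * Wᵀ) ^ 2 = B * Bᵀ ∧
      ∀ hp : (B * Bᵀ).PosSemidef, W * Wᵀ = hp.sqrt := by
  classical
  have hn0 : (n : ℝ) ≠ 0 := Nat.cast_ne_zero.mpr hn.ne'
  have hlam0 : lam ≠ 0 := hlam.ne'
  -- The linear map `V ↦ V h_i` as a continuous linear map into Euclidean space.
  let Lm : Fin n → Matrix (Fin d') (Fin d) ℝ →ₗ[ℝ] EuclideanSpace ℝ (Fin d') := fun i =>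
    { toFun := fun V => (WithLp.equiv 2 (Fin d' → ℝ)).symm (V.mulVec (h i))
      map_add' := fun A C => by
        ext j
        simp [Matrix.add_mulVec]
      map_smul' := fun c A => by
        ext j
        simp [Matrix.smul_mulVec] }
  let L : Fin n → Matrix (Fin d') (Fin d) ℝ →L[ℝ] EuclideanSpace ℝ (Fin d') := fun i =>
    (Lm i).toContinuousLinearMap
  -- The coordinate projection as a continuous linear map.
  let P : Fin d' → Fin d → (Matrix (Fin d') (Fin d) ℝ →L[ℝ] ℝ) := fun a b =>
    LinearMap.toContinuousLinearMap
      { toFun := fun V => V a b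
        map_add' := fun A C => rfl
        map_smul' := fun c A => rfl }
  -- the total derivative
  set D : Matrix (Fin d') (Fin d) ℝ →L[ℝ] ℝ :=
    (1 / n : ℝ) • (∑ i, (fderiv ℝ (ℓ i) (L i W)).comp (L i))
      + (lam / 2) • (∑ a : Fin d', ∑ b : Fin d, ((2 : ℝ) * W a b) • P a b) with hD
  have hFD : HasFDerivAt
      (fun V : Matrix (Fin d') (Fin d) ℝ =>
        (1 / n : ℝ) * ∑ i, ℓ i ((WithLp.equiv 2 (Fin d' → ℝ)).symm (V.mulVec (h i)))
          + (lam / 2) * ∑ a : Fin d', ∑ b : Fin d, V a b ^ 2) D W := by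
    apply HasFDerivAt.add
    · apply HasFDerivAt.const_mul
      apply HasFDerivAt.fun_sum
      intro i _
      exact ((hdiff i).differentiableAt.hasFDerivAt).comp W (L i).hasFDerivAt
    · apply HasFDerivAt.const_mul
      apply HasFDerivAt.fun_sum
      intro a _
      apply HasFDerivAt.fun_sum
      intro b _
      have hmul : HasFDerivAt (fun V : Matrix (Fin d') (Fin d) ℝ => V a b * V a b)
          (P a b W • P a b + P a b W • P a b) W :=
        (P a b).hasFDerivAt.mul (P a b).hasFDerivAt
      have hPW : P a b W = W a b := rfl
      rw [hPW, ← add_smul, ← two_mul] at hmul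
      refine hmul.congr_of_eventuallyEq ?_
      filter_upwards with V
      rw [pow_two]
  have hD0 : D = 0 := by rw [← hFD.fderiv]; exact hcrit
  -- the entrywise critical point equation
  have hW : ∀ a b, W a b =
      -(1 / (n * lam)) * ∑ i, grad (ℓ i) (W.mulVec (h i)) a * h i b := by
    intro a b
    have h1 : D (Matrix.single a b 1) = 0 := by rw [hD0]; simp
    rw [hD] at h1
    simp only [ContinuousLinearMap.add_apply, ContinuousLinearMap.smul_apply,
      ContinuousLinearMap.sum_apply, ContinuousLinearMap.comp_apply,
      smul_eq_mul] at h1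
    -- evaluate the linear maps on the standard basis matrix
    have hLval : ∀ i, L i (Matrix.single a b 1) =
        (WithLp.equiv 2 (Fin d' → ℝ)).symm (fun j => if j = a then h i b else 0) := by
      intro i
      show (WithLp.equiv 2 (Fin d' → ℝ)).symm ((Matrix.single a b 1).mulVec (h i)) = _
      congr 1
      funext j
      by_cases hj : j = a
      · subst hj
        simp [Matrix.mulVec, Matrix.single, dotProduct, ite_and, Finset.sum_ite_eq]
      · simp [Matrix.mulVec, Matrix.single, dotProduct, ite_and, Ne.symm hj, hj]
    have hPval : ∀ (a' : Fin d') (b' : Fin d), P a' b' (Matrix.single a b 1) =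
        if a' = a ∧ b' = b then 1 else 0 := by
      intro a' b'
      show Matrix.single a b 1 a' b' = _
      by_cases ha' : a' = a
      · by_cases hb' : b' = b
        · subst ha'; subst hb'; simp [Matrix.single]
        · simp [Matrix.single, ha', hb', Ne.symm hb']
      · simp [Matrix.single, ha', Ne.symm ha']
    have hfd : ∀ i, fderiv ℝ (ℓ i) (L i W) (L i (Matrix.single a b 1)) =
        grad (ℓ i) (W.mulVec (h i)) a * h i b := by
      intro i
      rw [hLval i, fderiv_eq_inner_gradient]
      have hLW : (L i W : EuclideanSpace ℝ (Fin d')) =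
          (WithLp.equiv 2 (Fin d' → ℝ)).symm (W.mulVec (h i)) := rfl
      rw [hLW, PiLp.inner_apply]
      simp only [RCLike.inner_apply, conj_trivial]
      rw [Finset.sum_eq_single a]
      · simp [grad, mul_comm]
      · intro j _ hj; simp [hj]
      · intro hja; exact absurd (Finset.mem_univ a) hja
    rw [Finset.sum_congr rfl (fun i _ => hfd i)] at h1
    have h2 : (∑ a' : Fin d', ∑ b' : Fin d,
        ((2 : ℝ) * W a' b') * P a' b' (Matrix.single a b 1)) = 2 * W a b := by
      rw [Finset.sum_congr rfl (fun a' _ => Finset.sum_congr rfl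
        (fun b' _ => by rw [hPval a' b']))]
      simp [mul_ite, Finset.sum_ite_eq, ite_and]
    rw [h2] at h1
    set S : ℝ := ∑ i, grad (ℓ i) (W.mulVec (h i)) a * h i b with hS
    clear hD hD0 hFD h2 hLval hPval hfd hcrit hB
    have h4 : lam / 2 * (2 * W a b) = lam * W a b := by ring
    rw [h4] at h1
    have h3 : W a b = (-(1 / (n : ℝ)) * S) / lam := by
      rw [eq_div_iff hlam0]
      linarith
    rw [h3]
    field_simp
  -- B = W Wᵀ
  have hBW : B = W * Wᵀ := by
    rw [hB]
    ext a c
    simp only [Matrix.smul_apply, Matrix.sum_apply, Matrix.vecMulVec_apply, smul_eq_mul,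
      Matrix.mul_apply, Matrix.transpose_apply]
    calc -(1 / (↑n * lam)) * ∑ i, (W.mulVec (h i)) a * grad (ℓ i) (W.mulVec (h i)) c
        = ∑ i, ∑ b, W a b * (-(1 / (↑n * lam)) * (grad (ℓ i) (W.mulVec (h i)) c * h i b)) := by
          rw [Finset.mul_sum]
          refine Finset.sum_congr rfl fun i _ => ?_
          simp only [Matrix.mulVec, dotProduct, Finset.sum_mul, Finset.mul_sum]
          refine Finset.sum_congr rfl fun b _ => ?_
          ring
      _ = ∑ b, ∑ i, W a b * (-(1 / (↑n * lam)) * (grad (ℓ i) (W.mulVec (h i)) c * h i b)) :=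
          Finset.sum_comm
      _ = ∑ b, W a b * (-(1 / (↑n * lam)) * ∑ i, grad (ℓ i) (W.mulVec (h i)) c * h i b) := by
          refine Finset.sum_congr rfl fun b _ => ?_
          rw [Finset.mul_sum, Finset.mul_sum]
      _ = ∑ b, W a b * W c b := by
          refine Finset.sum_congr rfl fun b _ => ?_
          rw [← hW c b]
  have hsym : (W * Wᵀ)ᵀ = W * Wᵀ := by
    rw [Matrix.transpose_mul, Matrix.transpose_transpose]
  have hmain : (W * Wᵀ) ^ 2 = B * Bᵀ := by
    rw [hBW, hsym, pow_two]
  refine ⟨hmain, fun hp => ?_⟩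
  have hpsd : (W * Wᵀ).PosSemidef := by
    have := Matrix.posSemidef_self_mul_conjTranspose W
    rwa [Matrix.conjTranspose_eq_transpose_of_trivial] at this
  exact psd_eq_sqrt_of_sq_eq hpsd hp hmain
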